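/- In the Cantor-set model, the composition of the baker's map supported on the cylinder A = [0] (acting in the first coordinate) with a suitable transposition of cylinders equals the product of two baker's maps supported respectively on the left half [00] and right half [01] of A. Formally: there exist a transposition τ of disjoint cylinder sets in C × C and baker's maps β_L, β_R with supports [00] × C and [01] × C such that β_A = τ ∘ (β_L ∘ β_R), where β_A is the baker's map with support [0] × C. -/

import Mathlib

/-- The Cantor set, modeled as infinite binary sequences. -/
abbrev C := ℕ → Bool

def shift (x : C) : C := fun n => x (n + 1)

def prepend (b : Bool) (y : C) : C
  | 0 => b
  | n + 1 => y n

/-- Concatenate a finite binary word with an infinite binary sequence. -/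
def cat (u : List Bool) (w : C) : C := fun n =>
  if h : n < u.length then u.get ⟨n, h⟩ else w (n - u.length)

/-- The cylinder of all infinite sequences with prefix `u`. -/
def cyl (u : List Bool) : Set C := Set.range (cat u)

/-- `φ` is the baker's map supported on the cylinder set `[u] × [v]`: on that cylinder it
moves the first digit after `u` of the first coordinate to just after `v` in the second
coordinate, and it is the identity elsewhere. -/
def IsBaker (u v : List Bool) (φ : Equiv.Perm (C × C)) : Prop :=
  (∀ w w' : C, φ (cat u w, cat v w') = (cat u (shift w), cat v (prepend (w 0) w'))) ∧
  ∀ p : C × C, p ∉ cyl u ×ˢ cyl v → φ p = p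

/-- `φ` is a transposition of two disjoint cylinder sets in `C × C`: it swaps them by
prefix replacement and fixes everything else. -/
def IsCylTransposition (φ : Equiv.Perm (C × C)) : Prop :=
  ∃ u v u' v' : List Bool,
    (cyl u ×ˢ cyl v) ∩ (cyl u' ×ˢ cyl v') = ∅ ∧
    (∀ w w' : C, φ (cat u w, cat v w') = (cat u' w, cat v' w')) ∧
    (∀ w w' : C, φ (cat u' w, cat v' w') = (cat u w, cat v w')) ∧
    ∀ p : C × C, p ∉ (cyl u ×ˢ cyl v) ∪ (cyl u' ×ˢ cyl v') → φ p = p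

open scoped Classical

/-! ### Auxiliary machinery -/

/-- `x` has prefix `u`. -/
def hp (u : List Bool) (x : C) : Prop := ∀ i (h : i < u.length), x i = u.get ⟨i, h⟩

lemma cat_nil (w : C) : cat [] w = w := by
  funext n; simp [cat]

lemma hp_cat (u : List Bool) (w : C) : hp u (cat u w) := by
  intro i h; simp [cat, h]

lemma cat_apply_len (u : List Bool) (w : C) : cat u w u.length = w 0 := by
  simp [cat]

lemma eq_cat_of_hp {u : List Bool} {x : C} (h : hp u x) :
    x = cat u (fun n => x (n + u.length)) := by
  funext n
  by_cases hn : n < u.length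
  · simp [cat, hn, h n hn]
  · simp [cat, hn, Nat.sub_add_cancel (le_of_not_gt hn)]

lemma mem_cyl_iff {u : List Bool} {x : C} : x ∈ cyl u ↔ hp u x := by
  constructor
  · rintro ⟨w, rfl⟩; exact hp_cat u w
  · intro h; exact ⟨_, (eq_cat_of_hp h).symm⟩

lemma hp_single {b : Bool} {x : C} : hp [b] x ↔ x 0 = b := by
  constructor
  · intro h; exact h 0 (by norm_num)
  · intro h i hi
    have hi' : i = 0 := by simpa [Nat.lt_one_iff] using hi
    subst hi'; simpa using h

lemma hp_pair {a b : Bool} {x : C} : hp [a, b] x ↔ x 0 = a ∧ x 1 = b := by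
  constructor
  · intro h; exact ⟨h 0 (by norm_num), h 1 (by norm_num)⟩
  · rintro ⟨h0, h1⟩ i hi
    have hi' : i < 2 := by simpa using hi
    interval_cases i
    · simpa using h0
    · simpa using h1

/-- Delete the entry at position `k`. -/
def del (k : ℕ) (x : C) : C := fun n => if n < k then x n else x (n + 1)

/-- Insert `b` at position `k`. -/
def ins (k : ℕ) (b : Bool) (x : C) : C := fun n =>
  if n < k then x n else if n = k then b else x (n - 1)

lemma ins_del (k : ℕ) (x : C) : ins k (x k) (del k x) = x := by
  funext n
  simp only [ins, del]
  rcases lt_trichotomy n k with hn | hn | hn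
  · simp [hn]
  · simp [hn]
  · have h1 : ¬ n < k := by omega
    have h2 : n ≠ k := by omega
    have h3 : ¬ n - 1 < k := by omega
    rw [if_neg h1, if_neg h2, if_neg h3,
      show n - 1 + 1 = n by omega]

lemma del_ins (k : ℕ) (b : Bool) (x : C) : del k (ins k b x) = x := by
  funext n
  simp only [ins, del]
  rcases lt_or_ge n k with hn | hn
  · simp [hn]
  · have h1 : ¬ n < k := by omega
    have h2 : ¬ n + 1 < k := by omega
    have h3 : n + 1 ≠ k := by omega
    rw [if_neg h1, if_neg h2, if_neg h3, Nat.add_sub_cancel]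

lemma ins_apply_self (k : ℕ) (b : Bool) (x : C) : ins k b x k = b := by
  simp [ins]

lemma shift_prepend (b : Bool) (y : C) : shift (prepend b y) = y := by
  funext n; rfl

lemma prepend_shift (y : C) : prepend (y 0) (shift y) = y := by
  funext n
  cases n with
  | zero => rfl
  | succ n => rfl

/-- The baker's map supported on `[u] × C`, as a bare function. -/
noncomputable def bfun (u : List Bool) : C × C → C × C := fun p =>
  if hp u p.1 then (del u.length p.1, prepend (p.1 u.length) p.2) else p

noncomputable def binv (u : List Bool) : C × C → C × C := fun p =>
  if hp u p.1 then (ins u.length (p.2 0) p.1, shift p.2) else p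

lemma bfun_pos {u : List Bool} {x y : C} (h : hp u x) :
    bfun u (x, y) = (del u.length x, prepend (x u.length) y) := if_pos h

lemma bfun_neg {u : List Bool} {x y : C} (h : ¬ hp u x) : bfun u (x, y) = (x, y) :=
  if_neg h

lemma binv_pos {u : List Bool} {x y : C} (h : hp u x) :
    binv u (x, y) = (ins u.length (y 0) x, shift y) := if_pos h

lemma binv_neg {u : List Bool} {x y : C} (h : ¬ hp u x) : binv u (x, y) = (x, y) :=
  if_neg h

lemma hp_del {u : List Bool} {x : C} (h : hp u x) : hp u (del u.length x) := by
  intro i hi; simpa [del, hi] using h i hi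

lemma hp_ins {u : List Bool} {x : C} (b : Bool) (h : hp u x) :
    hp u (ins u.length b x) := by
  intro i hi; simpa [ins, hi] using h i hi

lemma binv_bfun (u : List Bool) : Function.LeftInverse (binv u) (bfun u) := by
  rintro ⟨x, y⟩
  by_cases h : hp u x
  · rw [bfun_pos h, binv_pos (hp_del h), shift_prepend,
      show prepend (x u.length) y 0 = x u.length from rfl, ins_del]
  · rw [bfun_neg h, binv_neg h]

lemma bfun_binv (u : List Bool) : Function.RightInverse (binv u) (bfun u) := by
  rintro ⟨x, y⟩
  by_cases h : hp u x
  · rw [binv_pos h, bfun_pos (hp_ins (y 0) h), del_ins, ins_apply_self, prepend_shift]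
  · rw [binv_neg h, bfun_neg h]

/-- The baker's map supported on `[u] × C`, as a permutation. -/
noncomputable def bperm (u : List Bool) : Equiv.Perm (C × C) :=
  ⟨bfun u, binv u, binv_bfun u, bfun_binv u⟩

lemma bperm_apply (u : List Bool) (p : C × C) : bperm u p = bfun u p := rfl

lemma del_cat (u : List Bool) (w : C) : del u.length (cat u w) = cat u (shift w) := by
  funext n
  simp only [del, cat, shift]
  by_cases hn : n < u.length
  · simp [hn]
  · have h2 : ¬ n + 1 < u.length := by omega
    rw [if_neg hn, dif_neg h2, dif_neg hn,
      show n + 1 - u.length = n - u.length + 1 by omega]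

lemma isBaker_bperm (u : List Bool) : IsBaker u [] (bperm u) := by
  constructor
  · intro w w'
    rw [bperm_apply, cat_nil, cat_nil, bfun_pos (hp_cat u w), del_cat, cat_apply_len]
  · rintro ⟨x, y⟩ hxy
    rw [bperm_apply, bfun_neg]
    intro h
    exact hxy ⟨mem_cyl_iff.mpr h, ⟨y, cat_nil y⟩⟩

/-! ### The transposition -/

/-- Swaps `[01] × [0]` with `[00] × [1]` by flipping `x 1` and `y 0`. -/
noncomputable def tfun : C × C → C × C := fun p =>
  if p.1 0 = false ∧ p.1 1 ≠ p.2 0 then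
    (fun n => if n = 1 then !p.1 1 else p.1 n, fun n => if n = 0 then !p.2 0 else p.2 n)
  else p

lemma tfun_pos {x y : C} (h : x 0 = false) (h' : x 1 ≠ y 0) :
    tfun (x, y) = (fun n => if n = 1 then !x 1 else x n,
      fun n => if n = 0 then !y 0 else y n) := if_pos ⟨h, h'⟩

lemma tfun_neg {x y : C} (h : ¬ (x 0 = false ∧ x 1 ≠ y 0)) : tfun (x, y) = (x, y) :=
  if_neg h

lemma tfun_invol : Function.Involutive tfun := by
  rintro ⟨x, y⟩
  by_cases h : x 0 = false ∧ x 1 ≠ y 0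
  · rw [tfun_pos h.1 h.2, tfun_pos (by simpa using h.1)
      (by simp only [if_pos rfl]; cases c1 : x 1 <;> cases c2 : y 0 <;> simp_all)]
    refine Prod.ext ?_ ?_
    · funext n
      by_cases hn : n = 1 <;> simp [hn]
    · funext n
      by_cases hn : n = 0 <;> simp [hn]
  · rw [tfun_neg h, tfun_neg h]

noncomputable def tperm : Equiv.Perm (C × C) := tfun_invol.toPerm

lemma tperm_apply (p : C × C) : tperm p = tfun p := rfl

lemma tperm_swap₁ (w w' : C) :
    tperm (cat [false, true] w, cat [false] w') = (cat [false, false] w, cat [true] w') := by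
  rw [tperm_apply, tfun_pos (by simp [cat]) (by simp [cat])]
  refine Prod.ext ?_ ?_
  · funext n
    match n with
    | 0 => simp [cat]
    | 1 => simp [cat]
    | n + 2 => simp [cat]
  · funext n
    match n with
    | 0 => simp [cat]
    | n + 1 => simp [cat]

lemma tperm_swap₂ (w w' : C) :
    tperm (cat [false, false] w, cat [true] w') = (cat [false, true] w, cat [false] w') := by
  rw [tperm_apply, tfun_pos (by simp [cat]) (by simp [cat])]
  refine Prod.ext ?_ ?_
  · funext n
    match n with
    | 0 => simp [cat]
    | 1 => simp [cat]
    | n + 2 => simp [cat]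
  · funext n
    match n with
    | 0 => simp [cat]
    | n + 1 => simp [cat]

lemma isCylTransposition_tperm : IsCylTransposition tperm := by
  refine ⟨[false, true], [false], [false, false], [true], ?_, tperm_swap₁, tperm_swap₂, ?_⟩
  · ext ⟨x, y⟩
    simp only [Set.mem_inter_iff, Set.mem_prod, Set.mem_empty_iff_false, iff_false]
    rintro ⟨⟨hx1, -⟩, ⟨hx2, -⟩⟩
    rw [mem_cyl_iff, hp_pair] at hx1 hx2
    rw [hx1.2] at hx2
    exact absurd hx2.2 (by simp)
  · rintro ⟨x, y⟩ hxy
    rw [tperm_apply, tfun_neg]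
    rintro ⟨h0, h1⟩
    cases hx1 : x 1
    · -- x has prefix 00, y has prefix 1
      rw [hx1] at h1
      have hy0 : y 0 = true := by cases hy : y 0 <;> simp [hy] at h1 ⊢
      exact hxy (Or.inr ⟨mem_cyl_iff.mpr (hp_pair.mpr ⟨h0, hx1⟩),
        mem_cyl_iff.mpr (hp_single.mpr hy0)⟩)
    · rw [hx1] at h1
      have hy0 : y 0 = false := by cases hy : y 0 <;> simp [hy] at h1 ⊢
      exact hxy (Or.inl ⟨mem_cyl_iff.mpr (hp_pair.mpr ⟨h0, hx1⟩),
        mem_cyl_iff.mpr (hp_single.mpr hy0)⟩)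

/-- A map satisfying `IsBaker u []` is pointwise equal to `bfun u`. -/
lemma isBaker_eq {u : List Bool} {β : Equiv.Perm (C × C)} (hβ : IsBaker u [] β)
    (p : C × C) : β p = bfun u p := by
  obtain ⟨x, y⟩ := p
  by_cases h : hp u x
  · have hx := eq_cat_of_hp (x := x) h
    rw [show ((x, y) : C × C) = (cat u (fun n => x (n + u.length)), cat [] y) by
      rw [cat_nil]; exact Prod.ext hx rfl]
    rw [hβ.1, cat_nil, bfun_pos (hp_cat u _), del_cat, cat_apply_len, cat_nil]
  · rw [hβ.2 _ (by
      rintro ⟨hx, -⟩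
      exact h (mem_cyl_iff.mp hx))]
    rw [bfun_neg h]

theorem stmt_8 (β : Equiv.Perm (C × C)) (hβ : IsBaker [false] [] β) :
    ∃ τ βL βR : Equiv.Perm (C × C),
      IsCylTransposition τ ∧
      IsBaker [false, false] [] βL ∧
      IsBaker [false, true] [] βR ∧
      β = τ * (βL * βR) := by
  refine ⟨tperm, bperm [false, false], bperm [false, true],
    isCylTransposition_tperm, isBaker_bperm _, isBaker_bperm _, ?_⟩
  refine Equiv.ext fun p => ?_
  rw [isBaker_eq hβ]
  simp only [Equiv.Perm.mul_apply]
  rw [bperm_apply, bperm_apply, tperm_apply]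
  obtain ⟨x, y⟩ := p
  by_cases hx0 : x 0 = false
  · -- x ∈ [0]
    have h1 : hp [false] x := hp_single.mpr hx0
    have hd0 : del 2 x 0 = x 0 := by simp [del]
    have hd1 : del 2 x 1 = x 1 := by simp [del]
    rw [bfun_pos h1]
    cases hx1 : x 1
    · -- x ∈ [00]
      have hR : ¬ hp [false, true] x := by rw [hp_pair]; simp [hx1]
      have hL : hp [false, false] x := hp_pair.mpr ⟨hx0, hx1⟩
      rw [bfun_neg hR, bfun_pos hL]
      show _ = tfun (del 2 x, prepend (x 2) y)
      cases hx2 : x 2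
      · -- result stays in [00]×[0], τ fixes it
        rw [tfun_neg (by simp only [hd1, hx1, hx2]; exact fun h => h.2 rfl)]
        refine Prod.ext ?_ ?_
        · funext n
          match n with
          | 0 => simp [del]
          | 1 => simp [del, hx1, hx2]
          | n + 2 => simp [del]
        · funext n
          match n with
          | 0 => simp [prepend, hx1, hx2]
          | n + 1 => simp [prepend]
      · -- result in [00]×[1]: τ swaps to [01]×[0]
        rw [tfun_pos (by rw [hd0, hx0]) (by simp only [hd1, hx1, hx2]; simp [prepend])]
        refine Prod.ext ?_ ?_
        · funext n
          match n with
          | 0 => simp [del, hx0]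
          | 1 => simp [del, hx1, hx2]
          | n + 2 => simp [del]
        · funext n
          match n with
          | 0 => simp [prepend, hx1, hx2]
          | n + 1 => simp [prepend]
    · -- x ∈ [01]
      have hR : hp [false, true] x := hp_pair.mpr ⟨hx0, hx1⟩
      have hL : ¬ hp [false, false] (del 2 x) := by
        rw [hp_pair, hd1, hx1]; simp
      rw [bfun_pos hR]
      show _ = tfun (bfun [false, false] (del 2 x, prepend (x 2) y))
      rw [bfun_neg hL]
      cases hx2 : x 2
      · -- result in [01]×[0]: τ swaps to [00]×[1]
        rw [tfun_pos (by rw [hd0, hx0]) (by simp only [hd1, hx1, hx2]; simp [prepend])]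
        refine Prod.ext ?_ ?_
        · funext n
          match n with
          | 0 => simp [del, hx0]
          | 1 => simp [del, hd1, hx1, hx2]
          | n + 2 => simp [del]
        · funext n
          match n with
          | 0 => simp [prepend, hx1, hx2]
          | n + 1 => simp [prepend]
      · -- result in [01]×[1]: τ fixes it
        rw [tfun_neg (by simp only [hd1, hx1, hx2]; exact fun h => h.2 rfl)]
        refine Prod.ext ?_ ?_
        · funext n
          match n with
          | 0 => simp [del]
          | 1 => simp [del, hx1, hx2]
          | n + 2 => simp [del]
        · funext n
          match n with
          | 0 => simp [prepend, hx1, hx2]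
          | n + 1 => simp [prepend]
  · -- x ∉ [0]: everything is the identity
    have h1 : ¬ hp [false] x := fun h => hx0 (hp_single.mp h)
    have hR : ¬ hp [false, true] x := fun h => hx0 (hp_pair.mp h).1
    have hL : ¬ hp [false, false] x := fun h => hx0 (hp_pair.mp h).1
    rw [bfun_neg h1, bfun_neg hR, bfun_neg hL, tfun_neg (fun h => hx0 h.1)]
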